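/- Let ρ be a pseudometric on a set 𝒳, let Y = {y₁,...,y_m} ⊂ 𝒳, and suppose the ball B_ε^ρ(ȳ) contains strictly more than m/2 of the points of Y for some ȳ ∈ 𝒳 and ε > 0. For each i, set rᵢ = min{r ≥ 0 : |B_r^ρ(yᵢ) ∩ Y| > m/2}, let r̂ be the median of r₁,...,r_m, and let ℐ = {i : rᵢ ≤ r̂}. Then ρ(yᵢ, ȳ) ≤ 3ε for every i ∈ ℐ. -/
import Mathlib


open Finset

/-- robust distance estimation with a pseudometric.  If strictly more than
`m/2` of the points `y i` lie in the pseudometric ball `B_ε^ρ(ȳ)`, `r i` is the smallest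
radius such that `B_{r i}^ρ(y i)` contains strictly more than `m/2` of the points, `r̂`
is the `⌈m/2⌉`-th smallest of the `r i`, and `ℐ = {i : r i ≤ r̂}`, then `ρ(y i, ȳ) ≤ 3ε`
for all `i ∈ ℐ`. -/
theorem robust_distance_estimation_pseudometric {X : Type*} (m : ℕ) (hm : 1 ≤ m)
    (ρ : X → X → ℝ)
    (hnn : ∀ a b, 0 ≤ ρ a b) (hrefl : ∀ a, ρ a a = 0)
    (hsymm : ∀ a b, ρ a b = ρ b a)
    (htri : ∀ a b c, ρ a c ≤ ρ a b + ρ b c)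
    (y : Fin m → X) (ybar : X) (ε : ℝ) (hε : 0 < ε)
    (hmaj : (m : ℝ) / 2 <
      ((Finset.univ.filter (fun j => ρ (y j) ybar ≤ ε)).card : ℝ))
    (r : Fin m → ℝ)
    (hr : ∀ i, r i = sInf {s : ℝ | 0 ≤ s ∧ (m : ℝ) / 2 <
      ((Finset.univ.filter (fun j => ρ (y i) (y j) ≤ s)).card : ℝ)})
    (rhat : ℝ)
    (hrhat : rhat = r (Tuple.sort r ⟨(m + 1) / 2 - 1, by omega⟩)) :
    ∀ i, r i ≤ rhat → ρ (y i) ybar ≤ 3 * ε := by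
  have hune : (univ : Finset (Fin m)).Nonempty := ⟨⟨0, hm⟩, mem_univ _⟩
  have hbdd : ∀ i : Fin m, BddBelow {s : ℝ | 0 ≤ s ∧ (m : ℝ) / 2 <
      ((Finset.univ.filter (fun j => ρ (y i) (y j) ≤ s)).card : ℝ)} :=
    fun i => ⟨0, fun s hs => hs.1⟩
  have hm' : (1 : ℝ) ≤ m := by exact_mod_cast hm
  have hSne : ∀ i : Fin m, ({s : ℝ | 0 ≤ s ∧ (m : ℝ) / 2 <
      ((Finset.univ.filter (fun j => ρ (y i) (y j) ≤ s)).card : ℝ)}).Nonempty := by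
    intro i
    refine ⟨univ.sup' hune (fun j => ρ (y i) (y j)), ?_, ?_⟩
    · exact le_trans (hnn _ _) (le_sup' (fun j => ρ (y i) (y j)) (mem_univ (⟨0, hm⟩ : Fin m)))
    · have hfe : univ.filter
          (fun j => ρ (y i) (y j) ≤ univ.sup' hune (fun j => ρ (y i) (y j))) = univ :=
        filter_true_of_mem fun j _ => le_sup' (fun j => ρ (y i) (y j)) (mem_univ j)
      rw [hfe, card_univ, Fintype.card_fin]
      linarith
  have hrnn : ∀ i, 0 ≤ r i := by
    intro i; rw [hr i]; exact le_csInf (hSne i) (fun s hs => hs.1)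
  -- the infimum is attained: the ball of radius `r i` around `y i` has > m/2 points
  have key : ∀ i, (m : ℝ) / 2 <
      ((univ.filter (fun j => ρ (y i) (y j) ≤ r i)).card : ℝ) := by
    intro i
    by_contra h
    push_neg at h
    have hTne : (univ.filter (fun j => r i < ρ (y i) (y j))).Nonempty := by
      by_contra hT
      rw [not_nonempty_iff_eq_empty, filter_eq_empty_iff] at hT
      have hfe : univ.filter (fun j => ρ (y i) (y j) ≤ r i) = univ :=
        filter_true_of_mem fun j hj => le_of_not_gt (hT hj)
      rw [hfe, card_univ, Fintype.card_fin] at h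
      linarith
    set b := (univ.filter (fun j => r i < ρ (y i) (y j))).inf' hTne
      (fun j => ρ (y i) (y j)) with hb
    have hrb : r i < b := by
      rw [hb, Finset.lt_inf'_iff]
      intro j hj; exact (mem_filter.mp hj).2
    have hble : b ≤ r i := by
      rw [hr i]
      apply le_csInf (hSne i)
      intro s hs
      by_contra hsb
      push_neg at hsb
      have hsub : univ.filter (fun j => ρ (y i) (y j) ≤ s) ⊆
          univ.filter (fun j => ρ (y i) (y j) ≤ r i) := by
        intro j hj
        rw [mem_filter] at hj ⊢
        refine ⟨mem_univ _, ?_⟩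
        by_contra hjr
        push_neg at hjr
        have : b ≤ ρ (y i) (y j) :=
          Finset.inf'_le (fun j => ρ (y i) (y j)) (mem_filter.mpr ⟨mem_univ j, hjr⟩)
        linarith [hj.2]
      have := Finset.card_le_card hsub
      have : ((univ.filter (fun j => ρ (y i) (y j) ≤ s)).card : ℝ) ≤
          ((univ.filter (fun j => ρ (y i) (y j) ≤ r i)).card : ℝ) := by exact_mod_cast this
      linarith [hs.2]
    linarith
  -- if ρ(y i, ȳ) ≤ ε then r i ≤ 2ε
  have hsmall : ∀ i : Fin m, ρ (y i) ybar ≤ ε → r i ≤ 2 * ε := by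
    intro i hiε
    rw [hr i]
    apply csInf_le (hbdd i)
    refine ⟨by linarith, ?_⟩
    have hsub : univ.filter (fun j => ρ (y j) ybar ≤ ε) ⊆
        univ.filter (fun j => ρ (y i) (y j) ≤ 2 * ε) := by
      intro j hj
      rw [mem_filter] at hj ⊢
      refine ⟨mem_univ _, ?_⟩
      have := htri (y i) ybar (y j)
      rw [hsymm ybar (y j)] at this
      linarith [hj.2]
    have := Finset.card_le_card hsub
    have hc : ((univ.filter (fun j => ρ (y j) ybar ≤ ε)).card : ℝ) ≤
        ((univ.filter (fun j => ρ (y i) (y j) ≤ 2 * ε)).card : ℝ) := by exact_mod_cast this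
    linarith
  -- the median r̂ is at most 2ε
  set σ := Tuple.sort r with hσ
  set k : Fin m := ⟨(m + 1) / 2 - 1, by omega⟩ with hk
  have hrhat2 : rhat ≤ 2 * ε := by
    rw [hrhat]
    by_contra hgt
    push_neg at hgt
    -- the set of indices with r i ≤ 2ε has card ≥ (m+1)/2
    have hGcard : (m + 1) / 2 ≤ (univ.filter (fun i => r i ≤ 2 * ε)).card := by
      have hsub : univ.filter (fun j => ρ (y j) ybar ≤ ε) ⊆
          univ.filter (fun i => r i ≤ 2 * ε) := by
        intro j hj
        rw [mem_filter] at hj ⊢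
        exact ⟨mem_univ _, hsmall j hj.2⟩
      have h1 := Finset.card_le_card hsub
      have h2 : m < 2 * (univ.filter (fun j => ρ (y j) ybar ≤ ε)).card := by
        have : (m : ℝ) < 2 * ((univ.filter (fun j => ρ (y j) ybar ≤ ε)).card : ℝ) := by
          linarith
        exact_mod_cast this
      omega
    -- but that set injects into indices below k via σ
    have hGcard' : (univ.filter (fun i => r (σ i) ≤ 2 * ε)).card =
        (univ.filter (fun i => r i ≤ 2 * ε)).card := by
      apply Finset.card_bij (fun a _ => σ a)
      · intro a ha
        rw [mem_filter] at ha ⊢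
        exact ⟨mem_univ _, ha.2⟩
      · intro a _ b _ hab
        exact σ.injective hab
      · intro b hb
        rw [mem_filter] at hb
        refine ⟨σ.symm b, ?_, by simp⟩
        rw [mem_filter]
        exact ⟨mem_univ _, by simpa using hb.2⟩
    have hmono : Monotone (r ∘ σ) := Tuple.monotone_sort r
    have hsubIio : univ.filter (fun i => r (σ i) ≤ 2 * ε) ⊆ Finset.Iio k := by
      intro i hi
      rw [mem_filter] at hi
      rw [Finset.mem_Iio]
      by_contra hik
      push_neg at hik
      have : r (σ k) ≤ r (σ i) := hmono hik
      linarith [hi.2]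
    have := Finset.card_le_card hsubIio
    rw [hGcard', Fin.card_Iio] at this
    have hkv : (k : ℕ) = (m + 1) / 2 - 1 := rfl
    omega
  -- conclusion
  intro i hile
  have hri : r i ≤ 2 * ε := le_trans hile hrhat2
  -- the two majority sets intersect
  have hinter : (univ.filter (fun j => ρ (y i) (y j) ≤ r i) ∩
      univ.filter (fun j => ρ (y j) ybar ≤ ε)).Nonempty := by
    by_contra hempty
    rw [not_nonempty_iff_eq_empty] at hempty
    have hu := Finset.card_union_add_card_inter
      (univ.filter (fun j => ρ (y i) (y j) ≤ r i))
      (univ.filter (fun j => ρ (y j) ybar ≤ ε))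
    rw [hempty, Finset.card_empty, Nat.add_zero] at hu
    have hle : (univ.filter (fun j => ρ (y i) (y j) ≤ r i) ∪
        univ.filter (fun j => ρ (y j) ybar ≤ ε)).card ≤ m := by
      have := Finset.card_le_card (Finset.subset_univ
        ((univ.filter (fun j => ρ (y i) (y j) ≤ r i)) ∪
          (univ.filter (fun j => ρ (y j) ybar ≤ ε))))
      rwa [card_univ, Fintype.card_fin] at this
    have h2 : (m : ℝ) <
        ((univ.filter (fun j => ρ (y i) (y j) ≤ r i)).card : ℝ) +
        ((univ.filter (fun j => ρ (y j) ybar ≤ ε)).card : ℝ) := by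
      linarith [key i, hmaj]
    have h3 : m < (univ.filter (fun j => ρ (y i) (y j) ≤ r i)).card +
        (univ.filter (fun j => ρ (y j) ybar ≤ ε)).card := by exact_mod_cast h2
    omega
  obtain ⟨j, hj⟩ := hinter
  rw [Finset.mem_inter, mem_filter, mem_filter] at hj
  have := htri (y i) (y j) ybar
  linarith [hj.1.2, hj.2.2]
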